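/- arXiv:1606.01753 — 10 statements merged into one kernel-verified Lean document; each statement's English description precedes it below -/
import Mathlib

section
/- If a pair of n-bit inputs (a,b) generates a carry chain from i to j and also a carry chain from p to q, and (i,j) ≠ (p,q), then the integer intervals [i,j] and [p,q] are disjoint; that is, distinct carry chains generated by the same input pair do not overlap. -/
/-- The carry sequence: `c 0 = false` and
`c (k+1) = (a k ∧ b k) ∨ (a k ∧ c k) ∨ (b k ∧ c k)`. -/
def carry (a b : ℕ → Bool) : ℕ → Bool
  | 0 => false
  | k + 1 => (a k && b k) || (a k && carry a b k) || (b k && carry a b k)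

/-- The true sum bits: `s k = a k ⊕ b k ⊕ c k`. -/
def sumBit (a b : ℕ → Bool) (k : ℕ) : Bool :=
  Bool.xor (Bool.xor (a k) (b k)) (carry a b k)

/-- `(a,b)` generates a carry chain from `i` to `j` (for `1 ≤ i ≤ j ≤ n`):
`a (i-1) = b (i-1) = true`, `a k ≠ b k` for `i ≤ k ≤ j-1`, and `a j = b j`. -/
def IsCarryChain (n : ℕ) (a b : ℕ → Bool) (i j : ℕ) : Prop :=
  1 ≤ i ∧ i ≤ j ∧ j ≤ n ∧ a (i - 1) = true ∧ b (i - 1) = true ∧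
    (∀ k, i ≤ k → k ≤ j - 1 → a k ≠ b k) ∧ a j = b j

/-- Distinct carry chains generated by the same input pair do not overlap:
their integer intervals `[i,j]` and `[p,q]` are disjoint. -/
theorem distinct_carry_chains_disjoint
    (n : ℕ) (hn : 1 ≤ n) (a b : ℕ → Bool)
    (ha : ∀ k, n ≤ k → a k = false) (hb : ∀ k, n ≤ k → b k = false)
    (i j p q : ℕ)
    (h₁ : IsCarryChain n a b i j) (h₂ : IsCarryChain n a b p q)
    (hne : (i, j) ≠ (p, q)) :
    Disjoint (Finset.Icc i j) (Finset.Icc p q) := by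
  have key : ∀ i j p q : ℕ, IsCarryChain n a b i j → IsCarryChain n a b p q →
      i < p → j < p := by
    intro i j p q h₁ h₂ hip
    by_contra hpj
    push_neg at hpj
    obtain ⟨hi1, hij, hjn, hai, hbi, hchain, haj⟩ := h₁
    obtain ⟨hp1, hpq, hqn, hap, hbp, _, _⟩ := h₂
    exact hchain (p - 1) (by omega) (by omega) (by rw [hap, hbp])
  rcases lt_trichotomy i p with h | h | h
  · have := key i j p q h₁ h₂ h
    rw [Finset.disjoint_left]
    intro x hx hx'
    simp only [Finset.mem_Icc] at hx hx'
    omega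
  · subst h
    exfalso
    have hjq : j = q := by
      rcases lt_trichotomy j q with h' | h' | h'
      · exact absurd (h₁.2.2.2.2.2.2) (h₂.2.2.2.2.2.1 j h₁.2.1 (by omega))
      · exact h'
      · exact absurd (h₂.2.2.2.2.2.2) (h₁.2.2.2.2.2.1 q h₂.2.1 (by omega))
    exact hne (by rw [hjq])
  · have := key p q i j h₂ h₁ h
    rw [Finset.disjoint_left]
    intro x hx hx'
    simp only [Finset.mem_Icc] at hx hx'
    omega
end

section
/- If a pair of n-bit inputs (a,b) generates a carry chain from i to j, then the sum bits satisfy s k = false for all k with i ≤ k ≤ j-1 and s j = true. -/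
/-- If `(a,b)` generates a carry chain from `i` to `j`, then the sum bits satisfy
`s k = false` for all `i ≤ k ≤ j-1` and `s j = true`. -/
theorem carry_chain_sum_bits
    (n : ℕ) (hn : 1 ≤ n) (a b : ℕ → Bool)
    (ha : ∀ k, n ≤ k → a k = false) (hb : ∀ k, n ≤ k → b k = false)
    (i j : ℕ) (h : IsCarryChain n a b i j) :
    (∀ k, i ≤ k → k ≤ j - 1 → sumBit a b k = false) ∧ sumBit a b j = true := by
  obtain ⟨hi1, hij, hjn, hai, hbi, hne, haj⟩ := h
  have hcarry : ∀ k, i ≤ k → k ≤ j → carry a b k = true := by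
    intro k hik hkj
    induction k with
    | zero => omega
    | succ m ihm =>
      rcases Nat.lt_or_ge m i with hmi | hmi
      · have : m = i - 1 := by omega
        subst this
        simp [carry, hai, hbi]
      · have hc : carry a b m = true := ihm hmi (by omega)
        have hab : a m ≠ b m := hne m hmi (by omega)
        have : a m = true ∨ b m = true := by
          cases ham : a m
          · right; cases hbm : b m
            · exact absurd (ham.trans hbm.symm) hab
            · rfl
          · left; rfl
        rcases this with h1 | h1 <;> simp [carry, h1, hc]
  constructor
  · intro k hik hkj
    have hab : a k ≠ b k := hne k hik hkj
    have hc : carry a b k = true := hcarry k hik (by omega)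
    unfold sumBit
    rw [hc]
    cases ham : a k <;> cases hbm : b k <;> simp_all
  · have hc : carry a b j = true := hcarry j hij le_rfl
    unfold sumBit
    rw [hc, haj]
    cases b j <;> simp
end

section
/- For every k with 1 ≤ k ≤ n, the carry bit c k equals true if and only if there exist i and j with 1 ≤ i ≤ k ≤ j ≤ n such that (a,b) generates a carry chain from i to j. -/
lemma carry_true_iff (a b : ℕ → Bool) (k : ℕ) :
    carry a b k = true ↔ ∃ i, 1 ≤ i ∧ i ≤ k ∧ a (i-1) = true ∧ b (i-1) = true ∧
      ∀ m, i ≤ m → m < k → a m ≠ b m := by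
  induction k with
  | zero =>
    simp only [carry, Bool.false_eq_true, false_iff]
    rintro ⟨i, h1, h2, -⟩; omega
  | succ k ih =>
    rcases hak : a k <;> rcases hbk : b k
    · -- both false
      simp only [carry, hak, hbk, Bool.false_and, Bool.and_false, Bool.or_self,
        Bool.false_eq_true, false_iff]
      rintro ⟨i, h1, h2, h3, h4, h5⟩
      rcases Nat.lt_or_ge i (k+1) with h | h
      · exact h5 k (by omega) (by omega) (by rw [hak, hbk])
      · have : i = k + 1 := by omega
        subst this
        simp only [Nat.add_sub_cancel] at h3
        rw [hak] at h3; exact absurd h3 (by simp)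
    · -- a false, b true
      simp only [carry, hak, hbk, Bool.false_and, Bool.true_and, Bool.false_or, Bool.or_false]
      rw [ih]
      constructor
      · rintro ⟨i, h1, h2, h3, h4, h5⟩
        refine ⟨i, h1, by omega, h3, h4, fun m hm1 hm2 => ?_⟩
        rcases Nat.lt_or_ge m k with h | h
        · exact h5 m hm1 h
        · have : m = k := by omega
          subst this; rw [hak, hbk]; simp
      · rintro ⟨i, h1, h2, h3, h4, h5⟩
        have hik : i ≤ k := by
          rcases Nat.lt_or_ge i (k+1) with h | h
          · omega
          · have : i = k + 1 := by omega
            subst this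
            simp only [Nat.add_sub_cancel] at h3
            rw [hak] at h3; exact absurd h3 (by simp)
        exact ⟨i, h1, hik, h3, h4, fun m hm1 hm2 => h5 m hm1 (by omega)⟩
    · -- a true, b false
      simp only [carry, hak, hbk, Bool.and_false, Bool.false_and, Bool.true_and, Bool.false_or, Bool.or_false]
      rw [ih]
      constructor
      · rintro ⟨i, h1, h2, h3, h4, h5⟩
        refine ⟨i, h1, by omega, h3, h4, fun m hm1 hm2 => ?_⟩
        rcases Nat.lt_or_ge m k with h | h
        · exact h5 m hm1 h
        · have : m = k := by omega
          subst this; rw [hak, hbk]; simp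
      · rintro ⟨i, h1, h2, h3, h4, h5⟩
        have hik : i ≤ k := by
          rcases Nat.lt_or_ge i (k+1) with h | h
          · omega
          · have : i = k + 1 := by omega
            subst this
            simp only [Nat.add_sub_cancel] at h4
            rw [hbk] at h4; exact absurd h4 (by simp)
        exact ⟨i, h1, hik, h3, h4, fun m hm1 hm2 => h5 m hm1 (by omega)⟩
    · -- both true
      simp only [carry, hak, hbk, Bool.true_and, Bool.true_or, Bool.or_true, Bool.true_or,
        true_iff]
      refine ⟨k + 1, by omega, le_rfl, ?_, ?_, fun m hm1 hm2 => (by omega : False).elim⟩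
      · exact hak
      · exact hbk

/-- For `1 ≤ k ≤ n`, the carry bit `c k` is `true` iff `k` lies inside some carry
chain generated by `(a,b)`. -/
theorem carry_true_iff_mem_carry_chain
    (n : ℕ) (hn : 1 ≤ n) (a b : ℕ → Bool)
    (ha : ∀ k, n ≤ k → a k = false) (hb : ∀ k, n ≤ k → b k = false)
    (k : ℕ) (hk1 : 1 ≤ k) (hkn : k ≤ n) :
    carry a b k = true ↔ ∃ i j, i ≤ k ∧ k ≤ j ∧ IsCarryChain n a b i j := by
  rw [carry_true_iff]
  constructor
  · rintro ⟨i, h1, h2, h3, h4, h5⟩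
    have hQ : ∃ j, k ≤ j ∧ a j = b j := ⟨n, hkn, by rw [ha n le_rfl, hb n le_rfl]⟩
    classical
    set j := Nat.find hQ with hj
    obtain ⟨hkj, haj⟩ := Nat.find_spec hQ
    have hjn : j ≤ n := Nat.find_le ⟨hkn, by rw [ha n le_rfl, hb n le_rfl]⟩
    have hmin : ∀ m, k ≤ m → m < j → a m ≠ b m := fun m hm1 hm2 h =>
      Nat.find_min hQ hm2 ⟨hm1, h⟩
    refine ⟨i, j, h2, hkj, h1, by omega, hjn, h3, h4, fun m hm1 hm2 => ?_, haj⟩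
    rcases Nat.lt_or_ge m k with h | h
    · exact h5 m hm1 h
    · exact hmin m h (by omega)
  · rintro ⟨i, j, hik, hkj, h1, hij, hjn, h3, h4, h5, h6⟩
    exact ⟨i, h1, hik, h3, h4, fun m hm1 hm2 => h5 m hm1 (by omega)⟩
end

section
/- Suppose (a,b) generates a carry chain from i to j, and define the isolated inputs a' and b' by a' k = a k and b' k = b k for i-1 ≤ k ≤ j-1, and a' k = b' k = false for all other k. Then the pair (a',b') generates the carry chain from i to j and generates no other carry chain; that is, 𝒞(a',b') = {(i,j)}. -/
/-- Isolating a carry chain: if `(a,b)` generates a carry chain from `i` to `j`, and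
`a'`, `b'` agree with `a`, `b` on positions `i-1 ≤ k ≤ j-1` and are `false` elsewhere,
then `(a',b')` generates exactly the carry chain from `i` to `j` and no other, i.e.
`𝒞(a',b') = {(i,j)}`. -/
theorem isolated_inputs_generate_unique_chain
    (n : ℕ) (hn : 1 ≤ n) (a b : ℕ → Bool)
    (ha : ∀ k, n ≤ k → a k = false) (hb : ∀ k, n ≤ k → b k = false)
    (i j : ℕ) (hchain : IsCarryChain n a b i j)
    (a' b' : ℕ → Bool)
    (ha'₁ : ∀ k, i - 1 ≤ k → k ≤ j - 1 → a' k = a k)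
    (ha'₂ : ∀ k, ¬(i - 1 ≤ k ∧ k ≤ j - 1) → a' k = false)
    (hb'₁ : ∀ k, i - 1 ≤ k → k ≤ j - 1 → b' k = b k)
    (hb'₂ : ∀ k, ¬(i - 1 ≤ k ∧ k ≤ j - 1) → b' k = false) :
    ∀ p q, IsCarryChain n a' b' p q ↔ (p, q) = (i, j) := by
  obtain ⟨hi1, hij, hjn, hai, hbi, hch, haj⟩ := hchain
  have hi1j : i - 1 ≤ j - 1 := Nat.sub_le_sub_right hij 1
  intro p q
  constructor
  · rintro ⟨hp1, hpq, hqn, hap, hbp, hch', haq⟩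
    have hpa : i - 1 ≤ p - 1 ∧ p - 1 ≤ j - 1 := by
      by_contra h
      rw [ha'₂ _ h] at hap
      exact absurd hap (by simp)
    have hpi : p = i := by
      rcases Nat.lt_or_ge (p - 1) i with h | h
      · omega
      · exfalso
        apply hch (p - 1) h hpa.2
        rw [← ha'₁ _ hpa.1 hpa.2, ← hb'₁ _ hpa.1 hpa.2, hap, hbp]
    have hqj : q = j := by
      rcases lt_trichotomy q j with h | h | h
      · exfalso
        have h1 : i - 1 ≤ q := by omega
        have h2 : q ≤ j - 1 := by omega
        apply hch q (by omega) h2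
        rw [← ha'₁ q h1 h2, ← hb'₁ q h1 h2, haq, hb'₁ q h1 h2]
      · exact h
      · exfalso
        apply hch' j (by omega) (by omega)
        rw [ha'₂ j (by omega), hb'₂ j (by omega)]
    rw [hpi, hqj]
  · intro h
    obtain ⟨rfl, rfl⟩ := Prod.mk.inj h
    refine ⟨hi1, hij, hjn, ?_, ?_, ?_, ?_⟩
    · rw [ha'₁ (p - 1) le_rfl hi1j]; exact hai
    · rw [hb'₁ (p - 1) le_rfl hi1j]; exact hbi
    · intro k hk1 hk2
      rw [ha'₁ k (by omega) hk2, hb'₁ k (by omega) hk2]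
      exact hch k hk1 hk2
    · rw [ha'₂ q (by omega), hb'₂ q (by omega)]
end

section
/- Let c' be a conservative pseudo-carry for (a,b) and let s and s' be the corresponding true and pseudo sum bits. If s k ≠ s' k for some k, then c k = true and c' k = false, and there exist i, j with 1 ≤ i ≤ k ≤ j ≤ n such that (a,b) generates a carry chain from i to j; in other words, in a conservative pseudo-adder errors occur only at positions lying inside carry chains. -/
/-- The pseudo sum bits: `s' k = a k ⊕ b k ⊕ c' k`. -/
def pseudoSumBit (a b c' : ℕ → Bool) (k : ℕ) : Bool :=
  Bool.xor (Bool.xor (a k) (b k)) (c' k)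

lemma carry_high (n : ℕ) (a b : ℕ → Bool)
    (ha : ∀ k, n ≤ k → a k = false) (hb : ∀ k, n ≤ k → b k = false) :
    ∀ k, n < k → carry a b k = false := by
  intro k hk
  cases k with
  | zero => simp [carry]
  | succ m =>
    have hm : n ≤ m := Nat.lt_succ_iff.mp hk
    simp [carry, ha m hm, hb m hm]

lemma carry_gen (a b : ℕ → Bool) :
    ∀ k, carry a b k = true →
      ∃ m, m < k ∧ a m = true ∧ b m = true ∧ ∀ l, m < l → l < k → a l ≠ b l := by
  intro k
  induction k with
  | zero => simp [carry]
  | succ m ih =>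
    intro h
    rw [carry] at h
    cases ham : a m <;> cases hbm : b m <;> simp [ham, hbm] at h
    · obtain ⟨m', hm', ha', hb', hp⟩ := ih h
      refine ⟨m', hm'.trans (Nat.lt_succ_self m), ha', hb', ?_⟩
      intro l hl1 hl2
      rcases Nat.lt_succ_iff_lt_or_eq.mp hl2 with h' | h'
      · exact hp l hl1 h'
      · subst h'; simp [ham, hbm]
    · obtain ⟨m', hm', ha', hb', hp⟩ := ih h
      refine ⟨m', hm'.trans (Nat.lt_succ_self m), ha', hb', ?_⟩
      intro l hl1 hl2
      rcases Nat.lt_succ_iff_lt_or_eq.mp hl2 with h' | h'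
      · exact hp l hl1 h'
      · subst h'; simp [ham, hbm]
    · exact ⟨m, Nat.lt_succ_self m, ham, hbm, fun l hl1 hl2 => absurd hl1 (by omega)⟩

/-- In a conservative pseudo-adder, errors occur only at positions lying inside
carry chains: if `s k ≠ s' k` then `c k = true`, `c' k = false`, and `k` lies in
some carry chain generated by `(a,b)`. -/
theorem conservative_errors_inside_carry_chains
    (n : ℕ) (hn : 1 ≤ n) (a b : ℕ → Bool)
    (ha : ∀ k, n ≤ k → a k = false) (hb : ∀ k, n ≤ k → b k = false)
    (c' : ℕ → Bool) (hc'0 : c' 0 = false)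
    (hcons : ∀ k, c' k = true → carry a b k = true)
    (k : ℕ) (herr : sumBit a b k ≠ pseudoSumBit a b c' k) :
    carry a b k = true ∧ c' k = false ∧
      ∃ i j, i ≤ k ∧ k ≤ j ∧ IsCarryChain n a b i j := by
  have hne : carry a b k ≠ c' k := by
    intro h
    exact herr (by simp [sumBit, pseudoSumBit, h])
  have hck : carry a b k = true := by
    cases hc : c' k with
    | true => exact hcons k hc
    | false =>
      cases h : carry a b k with
      | true => rfl
      | false => exact absurd (h.trans hc.symm) hne
  have hc'k : c' k = false := by
    cases h : c' k with
    | false => rfl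
    | true => exact absurd (hck.trans (h.symm)) hne
  have hkn : k ≤ n := by
    by_contra hkn
    have := carry_high n a b ha hb k (Nat.lt_of_not_le hkn)
    simp [hck] at this
  obtain ⟨m, hmk, ham, hbm, hp⟩ := carry_gen a b k hck
  set i := m + 1 with hi
  have hP : ∃ j, k ≤ j ∧ a j = b j :=
    ⟨n, hkn, (ha n le_rfl).trans (hb n le_rfl).symm⟩
  classical
  set j := Nat.find hP with hj
  obtain ⟨hkj, habj⟩ := Nat.find_spec hP
  have hjn : j ≤ n := Nat.find_le ⟨hkn, (ha n le_rfl).trans (hb n le_rfl).symm⟩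
  refine ⟨hck, hc'k, i, j, hmk, hkj, ?_, Nat.le_trans hmk hkj, hjn, ?_, ?_, ?_, habj⟩
  · omega
  · simpa [hi] using ham
  · simpa [hi] using hbm
  · intro l hl1 hl2
    by_cases hlk : l < k
    · exact hp l (Nat.lt_of_succ_le hl1) hlk
    · have hkl : k ≤ l := Nat.le_of_not_lt hlk
      have hj1 : 1 ≤ j := le_trans (by omega : 1 ≤ k) hkj
      have hlj : l < j := by omega
      have := Nat.find_min hP hlj
      intro hab
      exact this ⟨hkl, hab⟩
end

section
/- Let c' be a conservative pseudo-carry for (a,b), suppose (a,b) generates a carry chain from i to j, and let k be a position with i ≤ k ≤ j at which c k ≠ c' k (so c k = true and c' k = false). Then: if k < j, the sum bits satisfy s k = false and s' k = true (so s k − s' k = −1 as an error contribution), and if k = j, they satisfy s j = true and s' j = false (so s j − s' j = +1). -/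
/-- Inside a carry chain from `i` to `j`, at a position `k` with `c k ≠ c' k`
we have `c k = true`, `c' k = false`, and: if `k < j` then `s k = false` and
`s' k = true` (error contribution `−1`), while if `k = j` then `s j = true` and
`s' j = false` (error contribution `+1`). -/
theorem error_position_inside_chain
    (n : ℕ) (hn : 1 ≤ n) (a b : ℕ → Bool)
    (ha : ∀ k, n ≤ k → a k = false) (hb : ∀ k, n ≤ k → b k = false)
    (c' : ℕ → Bool) (hc'0 : c' 0 = false)
    (hcons : ∀ k, c' k = true → carry a b k = true)
    (i j : ℕ) (hchain : IsCarryChain n a b i j)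
    (k : ℕ) (hik : i ≤ k) (hkj : k ≤ j) (hdiff : carry a b k ≠ c' k) :
    carry a b k = true ∧ c' k = false ∧
      (k < j → sumBit a b k = false ∧ pseudoSumBit a b c' k = true) ∧
      (k = j → sumBit a b j = true ∧ pseudoSumBit a b c' j = false) := by
  obtain ⟨hi1, hij, hjn, hai, hbi, hne, haj⟩ := hchain
  have key : ∀ m, i ≤ m → m ≤ j → carry a b m = true := by
    intro m hm
    induction m, hm using Nat.le_induction with
    | base =>
      intro _
      have h1 : i - 1 + 1 = i := Nat.succ_pred_eq_of_pos hi1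
      rw [← h1]
      simp [carry, hai, hbi]
    | succ m hm ih =>
      intro hmj
      have hc : carry a b m = true := ih (by omega)
      have hab : a m ≠ b m := hne m hm (by omega)
      simp only [carry, hc]
      cases h : a m <;> cases h' : b m <;> simp_all
  have hck : carry a b k = true := key k hik hkj
  have hc'k : c' k = false := by
    cases h : c' k
    · rfl
    · exact absurd (hck.trans h.symm) hdiff
  refine ⟨hck, hc'k, ?_, ?_⟩
  · intro hkj'
    have hab : a k ≠ b k := hne k hik (by omega)
    constructor
    · simp only [sumBit, hck]
      cases h : a k <;> cases h' : b k <;> simp_all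
    · simp only [pseudoSumBit, hc'k]
      cases h : a k <;> cases h' : b k <;> simp_all
  · intro hkj'
    subst hkj'
    constructor
    · simp only [sumBit, hck]
      cases h : a k <;> simp_all
    · simp only [pseudoSumBit, hc'k]
      cases h : a k <;> simp_all
end

section
/- Let c' be a conservative pseudo-carry for (a,b), suppose the set {k : c k ≠ c' k} is nonempty, let k₀ be its largest element, and let (i,j) be the (unique) carry chain generated by (a,b) with i ≤ k₀ ≤ j. Then val(s) ≠ val(s'), and val(s) > val(s') if and only if k₀ = j (equivalently, val(s) < val(s') if and only if k₀ < j). Thus the sign of the total error val(s) − val(s') is determined by the leftmost (highest-position) erroneous carry chain. -/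
/-- The numerical value of a bit vector on positions `0, …, n`. -/
def val (n : ℕ) (s : ℕ → Bool) : ℕ :=
  ∑ k ∈ Finset.range (n + 1), if s k then 2 ^ k else 0

/-- The sign of the total error is determined by the leftmost (highest-position)
erroneous carry chain: if `k₀` is the largest position with `c k₀ ≠ c' k₀` and
`(i,j)` is the carry chain containing `k₀`, then `val s ≠ val s'`, and
`val s > val s'` iff `k₀ = j`. -/
theorem sign_of_error_determined_by_leftmost_chain
    (n : ℕ) (hn : 1 ≤ n) (a b : ℕ → Bool)
    (ha : ∀ k, n ≤ k → a k = false) (hb : ∀ k, n ≤ k → b k = false)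
    (c' : ℕ → Bool) (hc'0 : c' 0 = false)
    (hcons : ∀ k, c' k = true → carry a b k = true)
    (k₀ : ℕ) (hk₀ : carry a b k₀ ≠ c' k₀)
    (hk₀max : ∀ k, carry a b k ≠ c' k → k ≤ k₀)
    (i j : ℕ) (hchain : IsCarryChain n a b i j) (hik : i ≤ k₀) (hkj : k₀ ≤ j) :
    val n (sumBit a b) ≠ val n (pseudoSumBit a b c') ∧
      (val n (pseudoSumBit a b c') < val n (sumBit a b) ↔ k₀ = j) := by

  classical
  obtain ⟨hi1, hij, hjn, hai, hbi, hne, haj⟩ := hchain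
  have hc'k₀ : c' k₀ = false := by
    cases h : c' k₀ with
    | false => rfl
    | true => exact absurd ((hcons k₀ h).trans h.symm) hk₀
  have hck₀ : carry a b k₀ = true := by
    cases h : carry a b k₀ with
    | false => exact absurd (h.trans hc'k₀.symm) hk₀
    | true => rfl
  have heq : ∀ k, k₀ < k → carry a b k = c' k := by
    intro k hk
    by_contra h
    exact absurd (hk₀max k h) (not_le.2 hk)
  set f : ℕ → ℤ := fun k =>
    (if sumBit a b k then (2:ℤ)^k else 0) -
      (if pseudoSumBit a b c' k then (2:ℤ)^k else 0) with hf
  have hval : ∀ s : ℕ → Bool,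
      ((val n s : ℤ)) = ∑ k ∈ Finset.range (n+1), (if s k then (2:ℤ)^k else 0) := by
    intro s
    unfold val
    push_cast
    rfl
  have hdiff : (val n (sumBit a b) : ℤ) - val n (pseudoSumBit a b c') =
      ∑ k ∈ Finset.range (n+1), f k := by
    rw [hval, hval, ← Finset.sum_sub_distrib]
  have hzero : ∀ k ∈ Finset.range (n+1), k ∉ Finset.range (k₀+1) → f k = 0 := by
    intro k _ hk
    simp only [Finset.mem_range, not_lt] at hk
    have hk' : k₀ < k := hk
    have hs : sumBit a b k = pseudoSumBit a b c' k := by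
      simp [sumBit, pseudoSumBit, heq k hk']
    simp [hf, hs]
  have hsub : Finset.range (k₀+1) ⊆ Finset.range (n+1) := by
    apply Finset.range_subset_range.2
    omega
  have hsum : ∑ k ∈ Finset.range (n+1), f k = ∑ k ∈ Finset.range (k₀+1), f k :=
    (Finset.sum_subset hsub hzero).symm
  have hgeom : ∀ m : ℕ, ∑ k ∈ Finset.range m, (2:ℤ)^k = 2^m - 1 := by
    intro m
    induction m with
    | zero => simp
    | succ m ih => rw [Finset.sum_range_succ, ih]; ring
  have hterm : ∀ k : ℕ, |f k| ≤ (2:ℤ)^k := by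
    intro k
    simp only [hf]
    split_ifs <;> simp <;> positivity
  have hbound : |∑ k ∈ Finset.range k₀, f k| ≤ 2^k₀ - 1 := by
    calc |∑ k ∈ Finset.range k₀, f k| ≤ ∑ k ∈ Finset.range k₀, |f k| :=
          Finset.abs_sum_le_sum_abs _ _
      _ ≤ ∑ k ∈ Finset.range k₀, (2:ℤ)^k :=
          Finset.sum_le_sum fun k _ => hterm k
      _ = 2^k₀ - 1 := hgeom k₀
  have hfk₀ : f k₀ = if a k₀ = b k₀ then (2:ℤ)^k₀ else -2^k₀ := by
    simp only [hf, sumBit, pseudoSumBit, hck₀, hc'k₀]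
    cases h1 : a k₀ <;> cases h2 : b k₀ <;> simp [h1, h2]
  have hkj_iff : k₀ = j ↔ a k₀ = b k₀ := by
    constructor
    · intro h; rw [h]; exact haj
    · intro h
      by_contra hne'
      have hlt : k₀ < j := lt_of_le_of_ne hkj hne'
      exact hne k₀ hik (by omega) h
  have htotal : (val n (sumBit a b) : ℤ) - val n (pseudoSumBit a b c') =
      f k₀ + ∑ k ∈ Finset.range k₀, f k := by
    rw [hdiff, hsum, Finset.sum_range_succ]; ring
  have habs := abs_le.1 hbound
  by_cases hab : a k₀ = b k₀
  · have hpos : (val n (pseudoSumBit a b c') : ℤ) < val n (sumBit a b) := by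
      have h2 : (0:ℤ) < 2^k₀ := by positivity
      have := htotal
      rw [hfk₀, if_pos hab] at this
      linarith [habs.1]
    have hlt : val n (pseudoSumBit a b c') < val n (sumBit a b) := by exact_mod_cast hpos
    exact ⟨(Nat.ne_of_lt hlt).symm, iff_of_true hlt (hkj_iff.2 hab)⟩
  · have hneg : (val n (sumBit a b) : ℤ) < val n (pseudoSumBit a b c') := by
      have h2 : (0:ℤ) < 2^k₀ := by positivity
      have := htotal
      rw [hfk₀, if_neg hab] at this
      linarith [habs.2]
    have hlt : val n (sumBit a b) < val n (pseudoSumBit a b c') := by exact_mod_cast hneg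
    exact ⟨Nat.ne_of_lt hlt, iff_of_false (by omega) (fun h => hab (hkj_iff.1 h))⟩
end

section
/- Suppose (a,b) generates a carry chain from i to j and the pseudo-carry c' satisfies: c' m = c m for every m not in the interval [k+1, j], and c' m = false for every m with k+1 ≤ m ≤ j, for some k with i ≤ k+1 ≤ j (this models a ripple-carry adder in which the carry has not yet propagated beyond position k). Then val(s) − val(s') = 2^j − ∑_{ℓ=k+1}^{j-1} 2^ℓ > 0; in particular, in a pseudo-adder based on the ripple-carry adder the error contributed by any carry chain is nonnegative. -/
/-- The numerical value (as an integer) of a bit vector on positions `0, …, n`. -/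
def valZ (n : ℕ) (s : ℕ → Bool) : ℤ :=
  ∑ k ∈ Finset.range (n + 1), if s k then (2 : ℤ) ^ k else 0

lemma chain_carry (n : ℕ) (a b : ℕ → Bool) (i j : ℕ) (h : IsCarryChain n a b i j) :
    ∀ m, i ≤ m → m ≤ j → carry a b m = true := by
  obtain ⟨hi1, hij, hjn, hai, hbi, hdiff, hj⟩ := h
  intro m him hmj
  induction m with
  | zero => omega
  | succ m ih =>
    rcases Nat.lt_or_ge i (m+1) with h1 | h1
    · have hc : carry a b m = true := ih (by omega) (by omega)
      have hab : a m ≠ b m := hdiff m (by omega) (by omega)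
      simp [carry, hc]
      cases ham : a m <;> cases hbm : b m <;> simp_all
    · have : i = m + 1 := by omega
      subst this
      simp only [carry]
      simp at hai hbi
      simp [hai, hbi]

/-- In a ripple-carry-based pseudo-adder, the error contributed by a carry chain is
nonnegative: if the carry of an `i`-`j` carry chain has not propagated beyond
position `k` (so `c' m = c m` off `[k+1, j]` and `c' m = false` on `[k+1, j]`), then
`val s − val s' = 2^j − ∑_{ℓ=k+1}^{j-1} 2^ℓ > 0`. -/
theorem rca_chain_error_nonneg
    (n : ℕ) (hn : 1 ≤ n) (a b : ℕ → Bool)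
    (ha : ∀ k, n ≤ k → a k = false) (hb : ∀ k, n ≤ k → b k = false)
    (c' : ℕ → Bool) (hc'0 : c' 0 = false)
    (i j k : ℕ) (hchain : IsCarryChain n a b i j)
    (hik : i ≤ k + 1) (hkj : k + 1 ≤ j)
    (hout : ∀ m, m < k + 1 ∨ j < m → c' m = carry a b m)
    (hin : ∀ m, k + 1 ≤ m → m ≤ j → c' m = false) :
    valZ n (sumBit a b) - valZ n (pseudoSumBit a b c') =
        2 ^ j - ∑ ℓ ∈ Finset.Ico (k + 1) j, (2 : ℤ) ^ ℓ ∧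
      0 < valZ n (sumBit a b) - valZ n (pseudoSumBit a b c') := by
  obtain ⟨hi1, hij, hjn, hai, hbi, hdiff, hj⟩ := hchain
  have hcarry := chain_carry n a b i j ⟨hi1, hij, hjn, hai, hbi, hdiff, hj⟩
  set d : ℕ → ℤ := fun m => (if sumBit a b m then (2:ℤ)^m else 0) -
      (if pseudoSumBit a b c' m then (2:ℤ)^m else 0) with hd
  have hsum : valZ n (sumBit a b) - valZ n (pseudoSumBit a b c') =
      ∑ m ∈ Finset.range (n+1), d m := by
    simp [valZ, hd, Finset.sum_sub_distrib]
  have hzero : ∀ m, (m < k + 1 ∨ j < m) → d m = 0 := by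
    intro m hm
    have := hout m hm
    simp [hd, sumBit, pseudoSumBit, this]
  have hsub : Finset.Ico (k+1) (j+1) ⊆ Finset.range (n+1) := by
    intro x hx; simp at hx ⊢; omega
  have hrestrict : ∑ m ∈ Finset.range (n+1), d m = ∑ m ∈ Finset.Ico (k+1) (j+1), d m := by
    rw [← Finset.sum_subset hsub]
    intro x hx hnx
    simp at hx hnx
    exact hzero x (by omega)
  have hdj : d j = 2^j := by
    have hcj : carry a b j = true := hcarry j hij le_rfl
    have hc'j : c' j = false := hin j hkj le_rfl
    simp only [hd, sumBit, pseudoSumBit, hcj, hc'j, hj]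
    cases hbj : b j <;> simp
  have hmid : ∀ m ∈ Finset.Ico (k+1) j, d m = -2^m := by
    intro m hm
    simp at hm
    have hcm : carry a b m = true := hcarry m (by omega) (by omega)
    have hc'm : c' m = false := hin m hm.1 (by omega)
    have hab : a m ≠ b m := hdiff m (by omega) (by omega)
    simp [hd, sumBit, pseudoSumBit, hcm, hc'm]
    cases ham : a m <;> cases hbm : b m <;> simp_all
  have hsplit : ∑ m ∈ Finset.Ico (k+1) (j+1), d m =
      (∑ m ∈ Finset.Ico (k+1) j, d m) + d j := Finset.sum_Ico_succ_top hkj _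
  have hval : valZ n (sumBit a b) - valZ n (pseudoSumBit a b c') =
      2 ^ j - ∑ ℓ ∈ Finset.Ico (k + 1) j, (2 : ℤ) ^ ℓ := by
    rw [hsum, hrestrict, hsplit, hdj, Finset.sum_congr rfl hmid]
    rw [Finset.sum_neg_distrib]
    ring
  refine ⟨hval, ?_⟩
  rw [hval]
  have hle : ∑ ℓ ∈ Finset.Ico (k + 1) j, (2 : ℤ) ^ ℓ ≤ ∑ ℓ ∈ Finset.range j, (2:ℤ)^ℓ := by
    apply Finset.sum_le_sum_of_subset_of_nonneg
    · intro x hx; simp at hx ⊢; omega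
    · intro x _ _; positivity
  have hgeo : ∑ ℓ ∈ Finset.range j, (2:ℤ)^ℓ = 2^j - 1 := by
    have := geom_sum_mul (2:ℤ) j
    simpa using this
  linarith
end

section
/- Let σ be any finite set of pairs (i,j) with 1 ≤ i ≤ j ≤ n whose intervals [i,j] are pairwise disjoint. Then there exist n-bit inputs a, b (functions ℕ → Bool vanishing from position n on) such that the set of carry chains generated by (a,b) is exactly σ, i.e. 𝒞(a,b) = σ. -/
/-- Every finite set of pairwise non-overlapping carry chains within `[1,n]` is
realized: there exist `n`-bit inputs `(a,b)` whose set of generated carry chains is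
exactly `σ`. -/
theorem nonoverlapping_chains_realizable
    (n : ℕ) (hn : 1 ≤ n) (σ : Finset (ℕ × ℕ))
    (hσ : ∀ p ∈ σ, 1 ≤ p.1 ∧ p.1 ≤ p.2 ∧ p.2 ≤ n)
    (hdisj : ∀ p ∈ σ, ∀ q ∈ σ, p ≠ q →
      Disjoint (Finset.Icc p.1 p.2) (Finset.Icc q.1 q.2)) :
    ∃ a b : ℕ → Bool,
      (∀ k, n ≤ k → a k = false) ∧ (∀ k, n ≤ k → b k = false) ∧
      ∀ i j, IsCarryChain n a b i j ↔ (i, j) ∈ σ := by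
  classical
  set A : ℕ → Bool :=
    fun k => decide (∃ p ∈ σ, k + 1 = p.1 ∨ (p.1 ≤ k ∧ k + 1 ≤ p.2)) with hA
  set B : ℕ → Bool := fun k => decide (∃ p ∈ σ, k + 1 = p.1) with hB
  have key : ∀ p ∈ σ, ∀ q ∈ σ, ∀ x : ℕ,
      p.1 ≤ x → x ≤ p.2 → q.1 ≤ x → x ≤ q.2 → p = q := by
    intro p hp q hq x h1 h2 h3 h4
    by_contra hne
    have := hdisj p hp q hq hne
    exact (Finset.disjoint_left.mp this (Finset.mem_Icc.mpr ⟨h1, h2⟩))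
      (Finset.mem_Icc.mpr ⟨h3, h4⟩)
  have hAiff : ∀ k, A k = true ↔
      (∃ p ∈ σ, k + 1 = p.1 ∨ (p.1 ≤ k ∧ k + 1 ≤ p.2)) := by
    intro k; simp [hA]
  have hBiff : ∀ k, B k = true ↔ (∃ p ∈ σ, k + 1 = p.1) := by
    intro k; simp [hB]
  -- endpoint lemma: at the right endpoint of any chain, A agrees with B
  have hend : ∀ q ∈ σ, A q.2 = B q.2 := by
    intro q hq
    have : (∃ p ∈ σ, q.2 + 1 = p.1 ∨ (p.1 ≤ q.2 ∧ q.2 + 1 ≤ p.2)) ↔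
        (∃ p ∈ σ, q.2 + 1 = p.1) := by
      constructor
      · rintro ⟨p, hp, h | ⟨h1, h2⟩⟩
        · exact ⟨p, hp, h⟩
        · have := key p hp q hq q.2 h1 (by omega) (hσ q hq).2.1 le_rfl
          subst this; omega
      · rintro ⟨p, hp, h⟩; exact ⟨p, hp, Or.inl h⟩
    simp only [hA, hB]
    exact decide_eq_decide.mpr this
  refine ⟨A, B, ?_, ?_, ?_⟩
  · intro k hk
    rw [Bool.eq_false_iff]
    intro h
    obtain ⟨p, hp, hcase⟩ := (hAiff k).mp h
    have := hσ p hp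
    omega
  · intro k hk
    rw [Bool.eq_false_iff]
    intro h
    obtain ⟨p, hp, hcase⟩ := (hBiff k).mp h
    have := hσ p hp
    omega
  · intro i j
    constructor
    · rintro ⟨h1i, hij, hjn, ha, hb, hmid, haj⟩
      obtain ⟨q, hq, hq1⟩ := (hBiff (i - 1)).mp hb
      have hqi : q.1 = i := by omega
      have hq2j : q.2 = j := by
        have hq12 := (hσ q hq).2.1
        by_contra hne
        rcases lt_or_gt_of_ne hne with hlt | hgt
        · -- q.2 < j : q.2 is in the middle range, but A q.2 = B q.2
          exact hmid q.2 (by omega) (by omega) (hend q hq)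
        · -- j < q.2 : A j = true but B j = false
          have hAj : A j = true := (hAiff j).mpr ⟨q, hq, Or.inr ⟨by omega, by omega⟩⟩
          have hBj : B j = false := by
            rw [Bool.eq_false_iff]
            intro h
            obtain ⟨r, hr, hr1⟩ := (hBiff j).mp h
            have := key r hr q hq r.1 le_rfl (hσ r hr).2.1 (by omega) (by omega)
            subst this; omega
          rw [hAj, hBj] at haj; exact Bool.noConfusion haj
      rw [← hqi, ← hq2j]; exact hq
    · intro hmem
      obtain ⟨h1i, hij, hjn⟩ := hσ (i, j) hmem
      refine ⟨h1i, hij, hjn, ?_, ?_, ?_, hend (i, j) hmem⟩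
      · exact (hAiff (i - 1)).mpr ⟨(i, j), hmem, Or.inl (by omega)⟩
      · exact (hBiff (i - 1)).mpr ⟨(i, j), hmem, by omega⟩
      · intro k hik hkj
        have hAk : A k = true := (hAiff k).mpr ⟨(i, j), hmem, Or.inr ⟨hik, by omega⟩⟩
        have hBk : B k = false := by
          rw [Bool.eq_false_iff]
          intro h
          obtain ⟨r, hr, hr1⟩ := (hBiff k).mp h
          have := key r hr (i, j) hmem r.1 le_rfl (hσ r hr).2.1 (by omega) (by omega)
          subst this; omega
        rw [hAk, hBk]; exact Bool.noConfusion
end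

section
/- Let E : ℕ × ℕ → ℤ assign an error to each carry chain. Let w_max (respectively w_min) be the maximum (respectively minimum) of ∑_{C ∈ σ} E C over all finite sets σ of pairs (i,j) with 1 ≤ i ≤ j ≤ n whose intervals [i,j] are pairwise disjoint (including the empty set, of weight 0). Then the maximum over all n-bit input pairs (a,b) of |∑_{C ∈ 𝒞(a,b)} E C| equals max(−w_min, w_max). -/
instance (n : ℕ) (a b : ℕ → Bool) (i j : ℕ) : Decidable (IsCarryChain n a b i j) := by
  have h : IsCarryChain n a b i j ↔
      (1 ≤ i ∧ i ≤ j ∧ j ≤ n ∧ a (i - 1) = true ∧ b (i - 1) = true ∧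
        (∀ k ∈ Finset.Icc i (j - 1), a k ≠ b k) ∧ a j = b j) := by
    simp only [IsCarryChain, Finset.mem_Icc, and_imp]
  rw [h]
  infer_instance

/-- `𝒞(a,b)`: the finite set of all carry chains generated by `(a,b)`. -/
def chainSet (n : ℕ) (a b : ℕ → Bool) : Finset (ℕ × ℕ) :=
  (Finset.Icc 1 n ×ˢ Finset.Icc 1 n).filter fun p => IsCarryChain n a b p.1 p.2

-- auxiliary lemmas

lemma chain_eq_of_overlap {n i j i' j' : ℕ} {a b : ℕ → Bool}
    (h1 : IsCarryChain n a b i j) (h2 : IsCarryChain n a b i' j')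
    (k : ℕ) (hk1 : i ≤ k) (hk2 : k ≤ j) (hk3 : i' ≤ k) (hk4 : k ≤ j') :
    i = i' ∧ j = j' := by
  obtain ⟨hi1, hij, hjn, ha1, hb1, hm1, he1⟩ := h1
  obtain ⟨hi1', hij', hjn', ha1', hb1', hm1', he1'⟩ := h2
  have hii : i = i' := by
    by_contra hne
    rcases Nat.lt_or_ge i i' with h | h
    · exact hm1 (i' - 1) (by omega) (by omega) (ha1'.trans hb1'.symm)
    · exact hm1' (i - 1) (by omega) (by omega) (ha1.trans hb1.symm)
  refine ⟨hii, ?_⟩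
  by_contra hne
  rcases Nat.lt_or_ge j j' with h | h
  · exact hm1' j (by omega) (by omega) he1
  · exact hm1 j' (by omega) (by omega) he1'

lemma mem_chainSet_iff {n i j : ℕ} {a b : ℕ → Bool} :
    (i, j) ∈ chainSet n a b ↔ IsCarryChain n a b i j := by
  constructor
  · intro h
    exact (Finset.mem_filter.mp h).2
  · intro h
    refine Finset.mem_filter.mpr ⟨?_, h⟩
    obtain ⟨hi1, hij, hjn, _⟩ := h
    simp only [Finset.mem_product, Finset.mem_Icc]
    omega

lemma chains_disjoint (n : ℕ) (a b : ℕ → Bool) :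
    ∀ p ∈ chainSet n a b, ∀ q ∈ chainSet n a b, p ≠ q →
      Disjoint (Finset.Icc p.1 p.2) (Finset.Icc q.1 q.2) := by
  rintro ⟨i, j⟩ hp ⟨i', j'⟩ hq hne
  rw [mem_chainSet_iff] at hp hq
  rw [Finset.disjoint_left]
  intro k hk hk'
  simp only [Finset.mem_Icc] at hk hk'
  obtain ⟨h1, h2⟩ := chain_eq_of_overlap hp hq k hk.1 hk.2 hk'.1 hk'.2
  exact hne (by simp [h1, h2])

def aFun (σ : Finset (ℕ × ℕ)) (k : ℕ) : Bool :=
  decide ((∃ p ∈ σ, p.1 = k + 1) ∨ (∃ p ∈ σ, p.1 ≤ k ∧ k + 1 ≤ p.2))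

def bFun (σ : Finset (ℕ × ℕ)) (k : ℕ) : Bool :=
  decide (∃ p ∈ σ, p.1 = k + 1)

lemma chainSet_realize (n : ℕ) (σ : Finset (ℕ × ℕ))
    (hb : ∀ p ∈ σ, 1 ≤ p.1 ∧ p.1 ≤ p.2 ∧ p.2 ≤ n)
    (hd : ∀ p ∈ σ, ∀ q ∈ σ, p ≠ q →
      Disjoint (Finset.Icc p.1 p.2) (Finset.Icc q.1 q.2)) :
    (∀ k, n ≤ k → aFun σ k = false) ∧ (∀ k, n ≤ k → bFun σ k = false) ∧
    chainSet n (aFun σ) (bFun σ) = σ := by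
  set S : ℕ → Prop := fun k => ∃ p ∈ σ, p.1 = k + 1 with hS
  set M : ℕ → Prop := fun k => ∃ p ∈ σ, p.1 ≤ k ∧ k + 1 ≤ p.2 with hM
  have hSM : ∀ k, S k → M k → False := by
    rintro k ⟨p, hp, hpk⟩ ⟨q, hq, hq1, hq2⟩
    have hpq : p ≠ q := by
      rintro rfl; omega
    have h1 : k + 1 ∈ Finset.Icc p.1 p.2 := Finset.mem_Icc.mpr (by have := hb p hp; omega)
    have h2 : k + 1 ∈ Finset.Icc q.1 q.2 := Finset.mem_Icc.mpr (by omega)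
    exact Finset.disjoint_left.mp (hd p hp q hq hpq) h1 h2
  have hMend : ∀ p ∈ σ, ¬ M p.2 := by
    rintro p hp ⟨q, hq, h1, h2⟩
    have hpq : p ≠ q := by
      rintro rfl; omega
    have h1 : p.2 ∈ Finset.Icc p.1 p.2 := Finset.mem_Icc.mpr (by have := hb p hp; omega)
    have h2 : p.2 ∈ Finset.Icc q.1 q.2 := Finset.mem_Icc.mpr (by omega)
    exact Finset.disjoint_left.mp (hd p hp q hq hpq) h1 h2
  have hMmid : ∀ p ∈ σ, ∀ k, p.1 ≤ k → k ≤ p.2 - 1 → M k := by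
    intro p hp k h1 h2
    exact ⟨p, hp, h1, by have := hb p hp; omega⟩
  have ha : ∀ k, aFun σ k = decide (S k ∨ M k) := fun k => rfl
  have hbf : ∀ k, bFun σ k = decide (S k) := fun k => rfl
  refine ⟨?_, ?_, ?_⟩
  · intro k hk
    rw [ha, decide_eq_false_iff_not]
    rintro (⟨p, hp, hpk⟩ | ⟨p, hp, h1, h2⟩) <;> have := hb p hp <;> omega
  · intro k hk
    rw [hbf, decide_eq_false_iff_not]
    rintro ⟨p, hp, hpk⟩; have := hb p hp; omega
  · ext ⟨i, j⟩
    rw [mem_chainSet_iff]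
    constructor
    · rintro ⟨hi1, hij, hjn, ha1, hb1, hm, he⟩
      rw [hbf, decide_eq_true_iff] at hb1
      obtain ⟨p, hp, hpi⟩ := hb1
      have hpi' : p.1 = i := by omega
      have hbp := hb p hp
      -- show j = p.2
      have hMj : ¬ M j := by
        intro hMj
        rw [ha, hbf, decide_eq_decide] at he
        exact hSM j (he.mp (Or.inr hMj)) hMj
      have hjp : j = p.2 := by
        by_contra hne
        rcases Nat.lt_or_ge j p.2 with h | h
        · exact hMj (hMmid p hp j (by omega) (by omega))
        · have hm2 : aFun σ p.2 ≠ bFun σ p.2 :=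
            hm p.2 (by omega) (by omega)
          rw [ha, hbf, ne_eq, decide_eq_decide] at hm2
          have hMp : M p.2 := by
            by_contra hMp
            exact hm2 ⟨fun h => h.elim id (fun h => absurd h hMp), Or.inl⟩
          exact hMend p hp hMp
      have : (i, j) = p := by
        ext <;> simp [hpi'.symm, hjp]
      rw [this]; exact hp
    · intro hp
      have hbp := hb (i, j) hp
      simp only at hbp
      refine ⟨by omega, by omega, by omega, ?_, ?_, ?_, ?_⟩
      · rw [ha, decide_eq_true_iff]
        exact Or.inl ⟨(i, j), hp, by omega⟩
      · rw [hbf, decide_eq_true_iff]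
        exact ⟨(i, j), hp, by omega⟩
      · intro k h1 h2
        have hMk : M k := hMmid (i, j) hp k h1 h2
        have hSk : ¬ S k := fun hSk => hSM k hSk hMk
        rw [ha, hbf, ne_eq, decide_eq_decide]
        intro hiff
        exact hSk (hiff.mp (Or.inr hMk))
      · have hMj : ¬ M j := hMend (i, j) hp
        rw [ha, hbf, decide_eq_decide]
        exact ⟨fun h => h.elim id (fun h => absurd h hMj), Or.inl⟩

/-- The maximum absolute error over all `n`-bit input pairs equals
`max (−w_min) w_max`, where `w_max` (resp. `w_min`) is the greatest (resp. least)
value of `∑_{C ∈ σ} E C` over all finite sets `σ` of carry chains in `[1,n]` with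
pairwise disjoint intervals (including the empty set, of weight `0`). -/
theorem max_abs_error_eq_max_neg_wmin_wmax
    (n : ℕ) (hn : 1 ≤ n) (E : ℕ × ℕ → ℤ) (wmax wmin : ℤ)
    (hmax : IsGreatest {w : ℤ | ∃ σ : Finset (ℕ × ℕ),
        (∀ p ∈ σ, 1 ≤ p.1 ∧ p.1 ≤ p.2 ∧ p.2 ≤ n) ∧
        (∀ p ∈ σ, ∀ q ∈ σ, p ≠ q →
          Disjoint (Finset.Icc p.1 p.2) (Finset.Icc q.1 q.2)) ∧
        w = ∑ C ∈ σ, E C} wmax)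
    (hmin : IsLeast {w : ℤ | ∃ σ : Finset (ℕ × ℕ),
        (∀ p ∈ σ, 1 ≤ p.1 ∧ p.1 ≤ p.2 ∧ p.2 ≤ n) ∧
        (∀ p ∈ σ, ∀ q ∈ σ, p ≠ q →
          Disjoint (Finset.Icc p.1 p.2) (Finset.Icc q.1 q.2)) ∧
        w = ∑ C ∈ σ, E C} wmin) :
    IsGreatest {e : ℤ | ∃ a b : ℕ → Bool,
        (∀ k, n ≤ k → a k = false) ∧ (∀ k, n ≤ k → b k = false) ∧
        e = |∑ C ∈ chainSet n a b, E C|}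
      (max (-wmin) wmax) := by
  have hwmax0 : 0 ≤ wmax := hmax.2 ⟨∅, by simp, by simp, by simp⟩
  have hwmin0 : wmin ≤ 0 := hmin.2 ⟨∅, by simp, by simp, by simp⟩
  constructor
  · rcases le_total (-wmin) wmax with h | h
    · obtain ⟨σ, hb, hd, hw⟩ := hmax.1
      obtain ⟨hA, hB, hC⟩ := chainSet_realize n σ hb hd
      exact ⟨aFun σ, bFun σ, hA, hB, by
        rw [hC, ← hw, abs_of_nonneg hwmax0, max_eq_right h]⟩
    · obtain ⟨σ, hb, hd, hw⟩ := hmin.1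
      obtain ⟨hA, hB, hC⟩ := chainSet_realize n σ hb hd
      exact ⟨aFun σ, bFun σ, hA, hB, by
        rw [hC, ← hw, abs_of_nonpos hwmin0, max_eq_left h]⟩
  · rintro e ⟨a, b, ha, hb, rfl⟩
    have hmem : (∑ C ∈ chainSet n a b, E C) ∈ {w : ℤ | ∃ σ : Finset (ℕ × ℕ),
        (∀ p ∈ σ, 1 ≤ p.1 ∧ p.1 ≤ p.2 ∧ p.2 ≤ n) ∧
        (∀ p ∈ σ, ∀ q ∈ σ, p ≠ q →
          Disjoint (Finset.Icc p.1 p.2) (Finset.Icc q.1 q.2)) ∧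
        w = ∑ C ∈ σ, E C} := by
      refine ⟨chainSet n a b, ?_, chains_disjoint n a b, rfl⟩
      intro p hp
      obtain ⟨h1, h2, h3, _⟩ := (Finset.mem_filter.mp hp).2
      exact ⟨h1, h2, h3⟩
    have h1 := hmax.2 hmem
    have h2 := hmin.2 hmem
    have h3 := le_max_left (-wmin) wmax
    have h4 := le_max_right (-wmin) wmax
    exact abs_le.mpr ⟨by linarith, by linarith⟩
end
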